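/- For all nonnegative integers n, p_8(2n+1) ≡ 0 (mod 8). -/

import Mathlib

/-- `f k = ∏_{j≥1} (1 - q^{k j})` as a formal power series over ℤ; the `n`-th
coefficient is computed from the (finite) product of the factors of degree `≤ n+1`,
which agrees with the infinite product. -/
noncomputable def f (k : ℕ) : PowerSeries ℤ :=
  PowerSeries.mk fun n =>
    PowerSeries.coeff (R := ℤ) n (∏ j ∈ Finset.range (n + 1), (1 - PowerSeries.X ^ (k * (j + 1))))

/-- `p8 n` is the number of 8-colour partitions of `n`, i.e. the `n`-th coefficient
of `1 / f_1^8`. -/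
noncomputable def p8 (n : ℕ) : ℤ := PowerSeries.coeff (R := ℤ) n (Ring.inverse (f 1 ^ 8))

open PowerSeries

/-- Truncated product. -/
noncomputable def P (k m : ℕ) : PowerSeries ℤ :=
  ∏ j ∈ Finset.range m, (1 - PowerSeries.X ^ (k * (j + 1)))

lemma C2_eq : (C (R := ℤ) 2 : ℤ⟦X⟧) = 2 := map_ofNat _ 2
lemma C8_eq : (C (R := ℤ) 8 : ℤ⟦X⟧) = 8 := map_ofNat _ 8

lemma prod_one_sub_dvd {N : ℕ} (s : Finset ℕ) (e : ℕ → ℕ) (he : ∀ j ∈ s, N ≤ e j) :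
    (X : ℤ⟦X⟧) ^ N ∣ (∏ j ∈ s, (1 - X ^ (e j))) - 1 := by
  classical
  induction s using Finset.induction with
  | empty => simp
  | @insert a s' hx ih =>
    rw [Finset.prod_insert hx]
    have h1 : (X : ℤ⟦X⟧) ^ N ∣ (∏ j ∈ s', (1 - X ^ (e j))) - 1 :=
      ih fun j hj => he j (Finset.mem_insert_of_mem hj)
    have h2 : (X : ℤ⟦X⟧) ^ N ∣ X ^ (e a) :=
      pow_dvd_pow _ (he a (Finset.mem_insert_self a s'))
    have : ((1 : ℤ⟦X⟧) - X ^ (e a)) * (∏ j ∈ s', (1 - X ^ (e j))) - 1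
        = ((∏ j ∈ s', ((1 : ℤ⟦X⟧) - X ^ (e j))) - 1) * (1 - X ^ (e a)) - X ^ (e a) := by ring
    rw [this]
    exact dvd_sub (h1.mul_right _) h2

lemma coeff_P_stable {k n m m' : ℕ} (hk : 1 ≤ k) (hn : n < m) (hm : m ≤ m') :
    PowerSeries.coeff (R := ℤ) n (P k m) = PowerSeries.coeff (R := ℤ) n (P k m') := by
  obtain ⟨d, rfl⟩ := Nat.exists_eq_add_of_le hm
  have hsplit : P k (m + d) = P k m * ∏ i ∈ Finset.range d, (1 - X ^ (k * (m + i + 1))) := by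
    unfold P
    rw [Finset.prod_range_add]
  have hdvd : (X : ℤ⟦X⟧) ^ m ∣ (∏ i ∈ Finset.range d, (1 - X ^ (k * (m + i + 1)))) - 1 := by
    apply prod_one_sub_dvd
    intro j _
    calc m ≤ m + j + 1 := by omega
    _ ≤ k * (m + j + 1) := Nat.le_mul_of_pos_left _ hk
  have hdvd2 : (X : ℤ⟦X⟧) ^ m ∣ P k (m + d) - P k m := by
    rw [hsplit]
    have : P k m * (∏ i ∈ Finset.range d, (1 - X ^ (k * (m + i + 1)))) - P k m
        = P k m * ((∏ i ∈ Finset.range d, (1 - X ^ (k * (m + i + 1)))) - 1) := by ring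
    rw [this]
    exact hdvd.mul_left _
  have := (PowerSeries.X_pow_dvd_iff.mp hdvd2) n hn
  rw [map_sub] at this
  linarith

lemma coeff_f_eq {k n m : ℕ} (hk : 1 ≤ k) (hn : n < m) :
    PowerSeries.coeff (R := ℤ) n (f k) = PowerSeries.coeff (R := ℤ) n (P k m) := by
  have : PowerSeries.coeff (R := ℤ) n (f k) = PowerSeries.coeff (R := ℤ) n (P k (n + 1)) := by
    simp [f, P, PowerSeries.coeff_mk]
  rw [this]
  exact coeff_P_stable hk (Nat.lt_succ_self n) hn

lemma X_pow_dvd_f_sub_P {k m : ℕ} (hk : 1 ≤ k) :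
    (X : ℤ⟦X⟧) ^ m ∣ f k - P k m := by
  rw [PowerSeries.X_pow_dvd_iff]
  intro i hi
  rw [map_sub, coeff_f_eq hk hi, sub_self]

lemma two_dvd_P_sq (m : ℕ) : (2 : ℤ⟦X⟧) ∣ P 1 m ^ 2 - P 2 m := by
  induction m with
  | zero => simp [P]
  | succ m ih =>
    have h1 : P 1 (m+1) = P 1 m * (1 - X ^ (1 * (m + 1))) := by
      unfold P; rw [Finset.prod_range_succ]
    have h2 : P 2 (m+1) = P 2 m * (1 - X ^ (2 * (m + 1))) := by
      unfold P; rw [Finset.prod_range_succ]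
    rw [h1, h2]
    obtain ⟨S, hS⟩ := ih
    have key : (P 1 m * (1 - X ^ (1 * (m + 1)))) ^ 2 - P 2 m * (1 - X ^ (2 * (m + 1)))
        = 2 * (S * (1 - X ^ (2 * (m + 1)))
          + P 1 m ^ 2 * (X ^ (2 * (m+1)) - X ^ (1 * (m+1)))) := by
      have expand : (P 1 m * (1 - X ^ (1 * (m + 1)))) ^ 2 - P 2 m * (1 - X ^ (2 * (m + 1)))
          = (P 1 m ^ 2 - P 2 m) * (1 - X ^ (2 * (m + 1)))
            + P 1 m ^ 2 * ((1 - X ^ (1 * (m + 1))) ^ 2 - (1 - X ^ (2 * (m + 1)))) := by ring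
      rw [expand, hS]
      ring
    rw [key]
    exact Dvd.intro _ rfl

lemma two_dvd_coeff_fsq (n : ℕ) : (2 : ℤ) ∣ PowerSeries.coeff (R := ℤ) n (f 1 ^ 2 - f 2) := by
  have hx1 : (X : ℤ⟦X⟧) ^ (n+1) ∣ f 1 ^ 2 - P 1 (n+1) ^ 2 := by
    have h := X_pow_dvd_f_sub_P (k := 1) (m := n+1) le_rfl
    have : f 1 ^ 2 - P 1 (n+1) ^ 2 = (f 1 - P 1 (n+1)) * (f 1 + P 1 (n+1)) := by ring
    rw [this]; exact h.mul_right _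
  have hx2 : (X : ℤ⟦X⟧) ^ (n+1) ∣ f 2 - P 2 (n+1) :=
    X_pow_dvd_f_sub_P (k := 2) (m := n+1) (by norm_num)
  have heq : PowerSeries.coeff (R := ℤ) n (f 1 ^ 2 - f 2)
      = PowerSeries.coeff (R := ℤ) n (P 1 (n+1) ^ 2 - P 2 (n+1)) := by
    have hd : (X : ℤ⟦X⟧) ^ (n+1) ∣ (f 1 ^ 2 - f 2) - (P 1 (n+1) ^ 2 - P 2 (n+1)) := by
      have : (f 1 ^ 2 - f 2) - (P 1 (n+1) ^ 2 - P 2 (n+1))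
          = (f 1 ^ 2 - P 1 (n+1) ^ 2) - (f 2 - P 2 (n+1)) := by ring
      rw [this]; exact dvd_sub hx1 hx2
    have := (PowerSeries.X_pow_dvd_iff.mp hd) n (Nat.lt_succ_self n)
    rw [map_sub] at this
    linarith
  rw [heq]
  obtain ⟨S, hS⟩ := two_dvd_P_sq (n+1)
  rw [hS, ← C2_eq, PowerSeries.coeff_C_mul]
  exact Dvd.intro _ rfl

lemma fsq_eq : ∃ S : ℤ⟦X⟧, f 1 ^ 2 = f 2 + 2 * S := by
  refine ⟨PowerSeries.mk fun n => PowerSeries.coeff (R := ℤ) n (f 1 ^ 2 - f 2) / 2, ?_⟩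
  ext n
  rw [map_add, ← C2_eq, PowerSeries.coeff_C_mul, PowerSeries.coeff_mk,
    Int.mul_ediv_cancel' (two_dvd_coeff_fsq n)]
  simp

lemma eight_dvd_f8 : (8 : ℤ⟦X⟧) ∣ f 1 ^ 8 - f 2 ^ 4 := by
  obtain ⟨S, hS⟩ := fsq_eq
  have h : f 1 ^ 8 = (f 1 ^ 2) ^ 4 := by ring
  rw [h, hS]
  exact ⟨f 2 ^ 3 * S + 3 * f 2 ^ 2 * S ^ 2 + 4 * f 2 * S ^ 3 + 2 * S ^ 4, by ring⟩

lemma constantCoeff_f {k : ℕ} (hk : 1 ≤ k) : PowerSeries.constantCoeff (R := ℤ) (f k) = 1 := by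
  have h0 : PowerSeries.coeff (R := ℤ) 0 (f k) = PowerSeries.coeff (R := ℤ) 0 (P k 1) := coeff_f_eq hk one_pos
  have h1 : P k 1 = 1 - X ^ (k * 1) := by unfold P; simp
  have hk0 : k * 1 ≠ 0 := by omega
  rw [← PowerSeries.coeff_zero_eq_constantCoeff_apply, h0, h1, map_sub,
    PowerSeries.coeff_zero_eq_constantCoeff_apply, PowerSeries.coeff_zero_eq_constantCoeff_apply]
  simp [zero_pow hk0]
  omega

lemma ring_inverse_map {R S : Type*} [CommRing R] [CommRing S] (h : R →+* S) {u : R}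
    (hu : IsUnit u) : h (Ring.inverse u) = Ring.inverse (h u) := by
  have h1 : h u * h (Ring.inverse u) = 1 := by
    rw [← map_mul, Ring.mul_inverse_cancel u hu, map_one]
  have h2 : Ring.inverse (h u) * h u = 1 := Ring.inverse_mul_cancel _ (hu.map h)
  calc h (Ring.inverse u) = (Ring.inverse (h u) * h u) * h (Ring.inverse u) := by
        rw [h2, one_mul]
  _ = Ring.inverse (h u) * (h u * h (Ring.inverse u)) := by ring
  _ = Ring.inverse (h u) := by rw [h1, mul_one]

lemma rescale_f2 : PowerSeries.rescale (-1 : ℤ) (f 2) = f 2 := by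
  ext n
  have hres : PowerSeries.rescale (-1 : ℤ) (P 2 (n+1)) = P 2 (n+1) := by
    unfold P
    rw [map_prod]
    refine Finset.prod_congr rfl fun j _ => ?_
    rw [map_sub, map_one, map_pow, PowerSeries.rescale_neg_one_X,
      (even_two_mul (j+1)).neg_pow]
  rw [PowerSeries.coeff_rescale,
    coeff_f_eq (k := 2) (by norm_num) (Nat.lt_succ_self n),
    ← PowerSeries.coeff_rescale, hres]

theorem p8_odd_cong (n : ℕ) : (8 : ℤ) ∣ p8 (2 * n + 1) := by
  have hu : IsUnit (f 1 ^ 8) := by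
    rw [PowerSeries.isUnit_iff_constantCoeff, map_pow, constantCoeff_f le_rfl, one_pow]
    exact isUnit_one
  have hv : IsUnit (f 2 ^ 4) := by
    rw [PowerSeries.isUnit_iff_constantCoeff, map_pow, constantCoeff_f (by norm_num), one_pow]
    exact isUnit_one
  -- odd coefficient of inverse of f2^4 vanishes
  have hrv : PowerSeries.rescale (-1 : ℤ) (f 2 ^ 4) = f 2 ^ 4 := by
    rw [map_pow, rescale_f2]
  have hrinv : PowerSeries.rescale (-1 : ℤ) (Ring.inverse (f 2 ^ 4))
      = Ring.inverse (f 2 ^ 4) := by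
    rw [ring_inverse_map _ hv, hrv]
  have hodd : PowerSeries.coeff (R := ℤ) (2 * n + 1) (Ring.inverse (f 2 ^ 4)) = 0 := by
    have hc := congrArg (PowerSeries.coeff (R := ℤ) (2 * n + 1)) hrinv
    rw [PowerSeries.coeff_rescale, Odd.neg_one_pow ⟨n, by ring⟩] at hc
    linarith
  -- difference of inverses divisible by 8
  have hdiff : (8 : ℤ⟦X⟧) ∣ Ring.inverse (f 1 ^ 8) - Ring.inverse (f 2 ^ 4) := by
    rw [Ring.inverse_sub_inverse (iff_of_true hu hv)]
    have h8 : (8 : ℤ⟦X⟧) ∣ f 2 ^ 4 - f 1 ^ 8 := by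
      have := dvd_neg.mpr eight_dvd_f8
      rwa [neg_sub] at this
    exact ((h8.mul_left _).mul_right _)
  obtain ⟨T, hT⟩ := hdiff
  have : p8 (2 * n + 1) = PowerSeries.coeff (R := ℤ) (2 * n + 1) ((8 : ℤ⟦X⟧) * T) := by
    unfold p8
    rw [← hT, map_sub, hodd, sub_zero]
  rw [this, ← C8_eq, PowerSeries.coeff_C_mul]
  exact Dvd.intro _ rfl
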